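/- For the semicircular distribution (μ with density √(4-x²)/(2π) on [-2,2]) and the signed measure μ' = (1/2)((δ_{-2}+δ_2)/2 - arcsine law), the Cauchy transform of μ' equals G(z)/(z²-4), where G is the Cauchy transform of μ, for all z in the upper half-plane. -/

import Mathlib

open Complex
open Real intervalIntegral MeasureTheory

lemma intInt_half : IntervalIntegrable (fun x : ℝ => (Real.sqrt (4 - x ^ 2))⁻¹)
    volume 0 2 := by
  have h0 : IntervalIntegrable (fun x : ℝ => x ^ (-(1/2) : ℝ)) volume 0 2 :=
    intervalIntegrable_rpow' (by norm_num)
  have h1 : IntervalIntegrable (fun x : ℝ => (Real.sqrt 2)⁻¹ * (2 - x) ^ (-(1/2) : ℝ))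
      volume 0 2 := by
    have := (h0.comp_sub_left 2).symm.const_mul (Real.sqrt 2)⁻¹
    simpa using this
  have hm : Measurable fun x : ℝ => (Real.sqrt (4 - x ^ 2))⁻¹ := by fun_prop
  refine h1.mono_fun hm.aestronglyMeasurable ?_
  rw [Set.uIoc_of_le (by norm_num : (0:ℝ) ≤ 2)]
  filter_upwards [ae_restrict_mem measurableSet_Ioc] with x hx
  obtain ⟨hx0, hx2⟩ := hx
  have h2x : (0:ℝ) ≤ 2 - x := by linarith
  have hrw : (2 - x) ^ (-(1/2) : ℝ) = (Real.sqrt (2 - x))⁻¹ := by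
    rw [Real.rpow_neg h2x, ← Real.sqrt_eq_rpow]
  simp only [norm_mul, norm_inv, Real.norm_eq_abs, hrw,
    _root_.abs_of_nonneg (Real.sqrt_nonneg _), _root_.abs_of_nonneg (inv_nonneg.mpr (Real.sqrt_nonneg _))]
  rw [← mul_inv]
  rcases eq_or_lt_of_le hx2 with h | h
  · rw [h]; norm_num
  · have key : Real.sqrt 2 * Real.sqrt (2 - x) ≤ Real.sqrt (4 - x ^ 2) := by
      rw [← Real.sqrt_mul (by norm_num)]
      exact Real.sqrt_le_sqrt (by nlinarith)
    have hpos : 0 < Real.sqrt 2 * Real.sqrt (2 - x) := by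
      have : (0:ℝ) < 2 - x := by linarith
      positivity
    exact inv_anti₀ hpos key



lemma intInt_sqrtinv : IntervalIntegrable (fun x : ℝ => (Real.sqrt (4 - x ^ 2))⁻¹)
    volume (-2) 2 := by
  have h := (IntervalIntegrable.iff_comp_neg (by simp)).mp intInt_half
  simp only [neg_neg, neg_zero] at h
  have h' : IntervalIntegrable (fun x : ℝ => (Real.sqrt (4 - x ^ 2))⁻¹) volume (-2) 0 := by
    have := h.symm
    refine this.congr_ae ?_
    filter_upwards [] with x
    simp [neg_pow]
  exact h'.trans intInt_half

lemma integral_sqrtinv : ∫ x in (-2:ℝ)..2, (Real.sqrt (4 - x ^ 2))⁻¹ = π := by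
  have hd : ∀ x ∈ Set.Ioo (-2:ℝ) 2,
      HasDerivWithinAt (fun y : ℝ => Real.arcsin (y / 2))
        ((Real.sqrt (4 - x ^ 2))⁻¹) (Set.Ioi x) x := by
    intro x hx
    have h1 : x / 2 ≠ -1 := by intro h; nlinarith [hx.1, (by linarith [h] : x = -2)]
    have h2 : x / 2 ≠ 1 := by intro h; nlinarith [hx.2, (by linarith [h] : x = 2)]
    have := (Real.hasDerivAt_arcsin h1 h2).comp x ((hasDerivAt_id x).div_const 2)
    have heq : 1 / Real.sqrt (1 - (x / 2) ^ 2) * (1 / 2) = (Real.sqrt (4 - x ^ 2))⁻¹ := by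
      have : (4:ℝ) - x ^ 2 = 2 ^ 2 * (1 - (x / 2) ^ 2) := by ring
      rw [this, Real.sqrt_mul (by positivity), Real.sqrt_sq (by norm_num : (0:ℝ) ≤ 2)]
      have hp : 0 < 1 - (x / 2) ^ 2 := by nlinarith [hx.1, hx.2]
      rw [one_div]
      field_simp
    rw [heq] at this
    exact this.hasDerivWithinAt
  have := integral_eq_sub_of_hasDeriv_right_of_le (by norm_num : (-2:ℝ) ≤ 2)
    ((Real.continuous_arcsin.comp (by fun_prop)).continuousOn) hd intInt_sqrtinv
  rw [this]
  norm_num [Real.arcsin_one, Real.arcsin_neg_one]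



-- arcsine density, real versions
lemma intInt_w : IntervalIntegrable (fun x : ℝ => 1 / (π * Real.sqrt (4 - x ^ 2)))
    volume (-2) 2 := by
  have := intInt_sqrtinv.const_mul π⁻¹
  refine this.congr_ae ?_
  filter_upwards [] with x
  rw [one_div, mul_inv]

lemma integral_w : ∫ x in (-2:ℝ)..2, 1 / (π * Real.sqrt (4 - x ^ 2)) = 1 := by
  have : ∀ x : ℝ, 1 / (π * Real.sqrt (4 - x ^ 2)) = π⁻¹ * (Real.sqrt (4 - x ^ 2))⁻¹ := by
    intro x; rw [one_div, mul_inv]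
  simp only [this]
  rw [intervalIntegral.integral_const_mul, integral_sqrtinv,
    inv_mul_cancel₀ Real.pi_ne_zero]

lemma integral_odd_w : ∫ x in (-2:ℝ)..2, x * (1 / (π * Real.sqrt (4 - x ^ 2))) = 0 := by
  set f : ℝ → ℝ := fun x => x * (1 / (π * Real.sqrt (4 - x ^ 2))) with hf
  have h1 : (∫ x in (-2:ℝ)..2, f (-x)) = ∫ x in (-(2:ℝ))..(-(-2:ℝ)), f x :=
    intervalIntegral.integral_comp_neg f
  have h2 : ∀ x, f (-x) = - f x := by
    intro x; simp only [hf]; rw [neg_pow]; ring_nf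
  simp only [h2, intervalIntegral.integral_neg, neg_neg] at h1
  linarith



set_option maxRecDepth 4000 in
theorem stmt_11 :
    ∀ z : ℂ, 0 < z.im →
      (1 / 2 : ℂ) * ((((z - (-2))⁻¹ + (z - 2)⁻¹) / 2)
          - ∫ t in (-2 : ℝ)..2, (z - (t : ℂ))⁻¹ *
              ((1 / (Real.pi * Real.sqrt (4 - t ^ 2)) : ℝ) : ℂ))
        = (∫ t in (-2 : ℝ)..2, (z - (t : ℂ))⁻¹ *
              ((Real.sqrt (4 - t ^ 2) / (2 * Real.pi) : ℝ) : ℂ)) / (z ^ 2 - 4) := by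
  intro z hz
  have hzt : ∀ t : ℝ, z - (t : ℂ) ≠ 0 := by
    intro t h
    have : (z - (t : ℂ)).im = 0 := by rw [h]; simp
    simp [Complex.sub_im] at this
    linarith
  have hz2' : z - 2 ≠ 0 := by
    have := hzt 2; simpa using this
  have hz2'' : z + 2 ≠ 0 := by
    have h := hzt (-2); push_cast at h
    simpa [sub_neg_eq_add] using h
  have hz4 : z ^ 2 - 4 ≠ 0 := by
    intro h
    have : (z - 2) * (z + 2) = 0 := by linear_combination h
    rcases mul_eq_zero.mp this with h' | h'
    · exact hz2' h'
    · exact hz2'' h'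
  -- coerced arcsine density integrable
  have hwC : IntervalIntegrable (fun t : ℝ => ((1 / (π * Real.sqrt (4 - t ^ 2)) : ℝ) : ℂ))
      volume (-2) 2 := ⟨intInt_w.1.ofReal, intInt_w.2.ofReal⟩
  have hcont : ContinuousOn (fun t : ℝ => (z - (t : ℂ))⁻¹) (Set.uIcc (-2:ℝ) 2) :=
    ((continuous_const.sub Complex.continuous_ofReal).inv₀ hzt).continuousOn
  have hg : IntervalIntegrable (fun t : ℝ => (z - (t : ℂ))⁻¹ *
      ((1 / (π * Real.sqrt (4 - t ^ 2)) : ℝ) : ℂ)) volume (-2) 2 :=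
    hwC.continuousOn_mul hcont
  -- pointwise key identity
  have key : ∀ t : ℝ, (z - (t : ℂ))⁻¹ * ((Real.sqrt (4 - t ^ 2) / (2 * π) : ℝ) : ℂ)
      = (z / 2) * ((1 / (π * Real.sqrt (4 - t ^ 2)) : ℝ) : ℂ)
        + (1 / 2 : ℂ) * ((t * (1 / (π * Real.sqrt (4 - t ^ 2))) : ℝ) : ℂ)
        - (z ^ 2 - 4) / 2 * ((z - (t : ℂ))⁻¹ * ((1 / (π * Real.sqrt (4 - t ^ 2)) : ℝ) : ℂ)) := by
    intro t
    rcases le_or_gt (4 - t ^ 2) 0 with h | h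
    · rw [Real.sqrt_eq_zero'.mpr h]
      simp only [zero_div, mul_zero, div_zero, one_div, inv_zero, Complex.ofReal_zero,
        zero_mul, add_zero, sub_zero, zero_add, neg_zero]
    · have hs : 0 < Real.sqrt (4 - t ^ 2) := Real.sqrt_pos.mpr h
      have ha2 : (Real.sqrt (4 - t ^ 2) : ℂ) ^ 2 = 4 - (t : ℂ) ^ 2 := by
        rw [← Complex.ofReal_pow, Real.sq_sqrt h.le]
        push_cast
        ring
      have hane : (Real.sqrt (4 - t ^ 2) : ℂ) ≠ 0 := by
        exact_mod_cast Complex.ofReal_ne_zero.mpr hs.ne'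
      have hpi : (π : ℂ) ≠ 0 := Complex.ofReal_ne_zero.mpr Real.pi_ne_zero
      push_cast
      set S : ℂ := ((Real.sqrt (4 - t ^ 2) : ℝ) : ℂ) with hS
      set T : ℂ := ((t : ℝ) : ℂ) with hT
      have hzT : z - T ≠ 0 := hzt t
      field_simp [hzT]
      linear_combination ha2
  -- integrability of the remaining pieces
  have htw : IntervalIntegrable (fun t : ℝ => t * (1 / (π * Real.sqrt (4 - t ^ 2))))
      volume (-2) 2 := intInt_w.continuousOn_mul continuous_id.continuousOn
  have htwC : IntervalIntegrable (fun t : ℝ => ((t * (1 / (π * Real.sqrt (4 - t ^ 2))) : ℝ) : ℂ))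
      volume (-2) 2 := ⟨htw.1.ofReal, htw.2.ofReal⟩
  have hsC : (∫ t in (-2:ℝ)..2, (z - (t : ℂ))⁻¹ * ((Real.sqrt (4 - t ^ 2) / (2 * π) : ℝ) : ℂ))
      = z / 2 - (z ^ 2 - 4) / 2 *
          ∫ t in (-2:ℝ)..2, (z - (t : ℂ))⁻¹ * ((1 / (π * Real.sqrt (4 - t ^ 2)) : ℝ) : ℂ) := by
    rw [intervalIntegral.integral_congr (fun t _ => key t)]
    rw [intervalIntegral.integral_sub ((hwC.const_mul _).add (htwC.const_mul _))
      (hg.const_mul _)]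
    rw [intervalIntegral.integral_add (hwC.const_mul _) (htwC.const_mul _)]
    rw [intervalIntegral.integral_const_mul, intervalIntegral.integral_const_mul,
      intervalIntegral.integral_const_mul, intervalIntegral.integral_ofReal,
      intervalIntegral.integral_ofReal, integral_w, integral_odd_w]
    norm_num
  rw [hsC]
  have hrw : z - (-2) = z + 2 := by ring
  rw [hrw]
  field_simp
  ring
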